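/- arXiv:2207.13910 — 2 statements merged into one kernel-verified Lean document; each statement's English description precedes it below -/
import Mathlib

section
/- Suppose (g₀; n₁, …, n_k) is the signature of a cyclic action of order n on a closed orientable surface of genus g ≥ 2, satisfying the Riemann–Hurwitz equation (2g−2)/n = 2g₀ − 2 + Σᵢ(1 − 1/nᵢ) with each nᵢ ≥ 2 dividing n. If g₀ ≥ 2 then n ≤ g − 1. -/
/-- Riemann–Hurwitz: if `(2g−2)/n = 2g₀ − 2 + Σᵢ (1 − 1/nᵢ)` with `g ≥ 2`, `n ≥ 2`,
each `nᵢ ≥ 2` dividing `n`, and `g₀ ≥ 2`, then `n ≤ g − 1`. -/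
theorem stmt12 (n g g₀ k : ℕ) (ni : Fin k → ℕ)
    (hn : 2 ≤ n) (hg : 2 ≤ g)
    (hni : ∀ i, 2 ≤ ni i) (hdvd : ∀ i, ni i ∣ n)
    (hRH : (2 * (g : ℚ) - 2) / n =
      2 * (g₀ : ℚ) - 2 + ∑ i, (1 - 1 / (ni i : ℚ)))
    (hg₀ : 2 ≤ g₀) :
    (n : ℤ) ≤ (g : ℤ) - 1 := by
  have hnq : (0:ℚ) < n := by exact_mod_cast Nat.lt_of_lt_of_le (by norm_num) hn
  have hsum : (0:ℚ) ≤ ∑ i, (1 - 1 / (ni i : ℚ)) := by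
    apply Finset.sum_nonneg
    intro i _
    have h2 : (2:ℚ) ≤ ni i := by exact_mod_cast hni i
    have : 1 / (ni i : ℚ) ≤ 1 := by
      rw [div_le_one (by linarith)]; linarith
    linarith
  have hg0q : (2:ℚ) ≤ g₀ := by exact_mod_cast hg₀
  have h2 : (2:ℚ) ≤ (2 * (g : ℚ) - 2) / n := by rw [hRH]; linarith
  have h3 : 2 * (n:ℚ) ≤ 2 * (g:ℚ) - 2 := by
    have := (le_div_iff₀ hnq).mp h2
    linarith
  have : (n:ℚ) ≤ (g:ℚ) - 1 := by linarith
  exact_mod_cast this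
end

section
/- Suppose a cyclic group of order n acts on a genus-g surface (g ≥ 2) with quotient a sphere with exactly 3 cone points of orders n₁ ≤ n₂ ≤ n₃, each dividing n, with lcm of any two of them equal to n, and (2g−2)/n = 1 − 1/n₁ − 1/n₂ − 1/n₃. Then n ≥ 2g + 1. -/
/-- If a cyclic group of order `n` acts on a genus-`g` surface (`g ≥ 2`) with quotient a
sphere with three cone points of orders `n₁ ≤ n₂ ≤ n₃`, each dividing `n`, with the lcm of
any two of them equal to `n`, and the Riemann–Hurwitz equation
`(2g−2)/n = 1 − 1/n₁ − 1/n₂ − 1/n₃` holds, then `n ≥ 2g + 1`. -/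
theorem stmt17 (n g n₁ n₂ n₃ : ℕ)
    (hn : 2 ≤ n) (hg : 2 ≤ g)
    (h1 : 2 ≤ n₁) (h2 : 2 ≤ n₂) (h3 : 2 ≤ n₃)
    (h12 : n₁ ≤ n₂) (h23 : n₂ ≤ n₃)
    (hd1 : n₁ ∣ n) (hd2 : n₂ ∣ n) (hd3 : n₃ ∣ n)
    (hl12 : Nat.lcm n₁ n₂ = n) (hl13 : Nat.lcm n₁ n₃ = n) (hl23 : Nat.lcm n₂ n₃ = n)
    (hRH : (2 * (g : ℚ) - 2) / n = 1 - 1 / n₁ - 1 / n₂ - 1 / n₃) :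
    2 * g + 1 ≤ n := by
  obtain ⟨a₁, ha1⟩ := hd1
  obtain ⟨a₂, ha2⟩ := hd2
  obtain ⟨a₃, ha3⟩ := hd3
  have hN : (n:ℚ) ≠ 0 := by exact_mod_cast (by omega : n ≠ 0)
  have hN1 : (n₁:ℚ) ≠ 0 := by exact_mod_cast (by omega : n₁ ≠ 0)
  have hN2 : (n₂:ℚ) ≠ 0 := by exact_mod_cast (by omega : n₂ ≠ 0)
  have hN3 : (n₃:ℚ) ≠ 0 := by exact_mod_cast (by omega : n₃ ≠ 0)
  have e1 : (n:ℚ) = n₁ * a₁ := by exact_mod_cast congrArg (Nat.cast : ℕ → ℚ) ha1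
  have e2 : (n:ℚ) = n₂ * a₂ := by exact_mod_cast congrArg (Nat.cast : ℕ → ℚ) ha2
  have e3 : (n:ℚ) = n₃ * a₃ := by exact_mod_cast congrArg (Nat.cast : ℕ → ℚ) ha3
  have key : (n:ℚ) = 2 * g - 2 + a₁ + a₂ + a₃ := by
    field_simp at hRH
    have key' : (n:ℚ) * (n₁*n₂*n₃) = (2 * g - 2 + a₁ + a₂ + a₃) * (n₁*n₂*n₃) := by
      linear_combination -hRH + (n₂:ℚ)*n₃*e1 + (n₁:ℚ)*n₃*e2 + (n₁:ℚ)*n₂*e3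
    have hne : ((n₁:ℚ)*n₂*n₃) ≠ 0 := by positivity
    exact mul_right_cancel₀ hne key'
  have ka1 : 1 ≤ a₁ := Nat.pos_of_ne_zero (by rintro rfl; simp at ha1; omega)
  have ka2 : 1 ≤ a₂ := Nat.pos_of_ne_zero (by rintro rfl; simp at ha2; omega)
  have ka3 : 1 ≤ a₃ := Nat.pos_of_ne_zero (by rintro rfl; simp at ha3; omega)
  have : (2 * g + 1 : ℚ) ≤ n := by
    rw [key]
    have : (1:ℚ) ≤ a₁ := by exact_mod_cast ka1
    have : (1:ℚ) ≤ a₂ := by exact_mod_cast ka2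
    have : (1:ℚ) ≤ a₃ := by exact_mod_cast ka3
    push_cast
    linarith
  exact_mod_cast this
end
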